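/- Fix an integer n ≥ 1 and let X₁, X₂, … be i.i.d. uniform on [n] = {1,…,n}. Let A₁, …, A_v ⊆ [n] be pairwise disjoint nonempty subsets, and for nonempty J ⊆ [n] let T_J denote the least r ≥ 1 such that every element of J appears among X₁,…,X_r. Then E[min_{1≤j≤v} T_{A_j}] = n·Σ_{s=1}^{v} (−1)^{s+1} Σ_{1 ≤ j₁ < ⋯ < j_s ≤ v} H_{|A_{j₁}| + ⋯ + |A_{j_s}|}, where H_m = Σ_{j=1}^m 1/j. -/

import Mathlib

open MeasureTheory Finset
open scoped ENNReal

/-- The first time `r ≥ 1` (as an element of `[0,∞]`, with value `∞` if there is no such time)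
at which the condition `cond r ω` holds. -/
noncomputable def firstTime {Ω : Type*} (cond : ℕ → Ω → Prop) (ω : Ω) : ℝ≥0∞ :=
  sInf {x : ℝ≥0∞ | ∃ r : ℕ, x = (r : ℝ≥0∞) ∧ 1 ≤ r ∧ cond r ω}

/-- The `m`-th harmonic number `H_m = Σ_{j=1}^m 1/j`. -/
noncomputable def harmonicNumber (m : ℕ) : ℝ := ∑ j ∈ Finset.range m, 1 / ((j : ℝ) + 1)


lemma iInf_firstTime {Ω ι : Type*} (cond : ι → ℕ → Ω → Prop) (ω : Ω) :
    ⨅ j, firstTime (cond j) ω = firstTime (fun r ω => ∃ j, cond j r ω) ω := by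
  unfold firstTime
  apply le_antisymm
  · refine le_sInf ?_
    rintro x ⟨r, rfl, hr, j, hj⟩
    exact (iInf_le _ j).trans (sInf_le ⟨r, rfl, hr, hj⟩)
  · refine le_iInf fun j => le_sInf ?_
    rintro x ⟨r, rfl, hr, hj⟩
    exact sInf_le ⟨r, rfl, hr, j, hj⟩

lemma firstTime_eq_tsum {Ω : Type*} (cond : ℕ → Ω → Prop) (ω : Ω)
    (hmono : ∀ r r', r ≤ r' → cond r ω → cond r' ω) (h0 : ¬ cond 0 ω) :
    firstTime cond ω = ∑' r : ℕ, ({ω | ¬ cond r ω}).indicator (fun _ => (1:ℝ≥0∞)) ω := by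
  classical
  by_cases hex : ∃ r, cond r ω
  · set k := Nat.find hex with hkdef
    have hk : cond k ω := Nat.find_spec hex
    have hk1 : 1 ≤ k := by
      rcases Nat.eq_zero_or_pos k with h | h
      · exact absurd (h ▸ hk) h0
      · exact h
    have hlt : ∀ r, r < k → ¬ cond r ω := fun r hr => Nat.find_min hex hr
    have hge : ∀ r, k ≤ r → cond r ω := fun r hr => hmono k r hr hk
    have hL : firstTime cond ω = (k : ℝ≥0∞) := by
      apply le_antisymm
      · exact sInf_le ⟨k, rfl, hk1, hk⟩
      · refine le_sInf ?_
        rintro x ⟨r, rfl, hr1, hr⟩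
        exact_mod_cast Nat.find_min' hex hr
    rw [hL]
    have hind : ∀ r : ℕ, ({ω | ¬ cond r ω}).indicator (fun _ => (1:ℝ≥0∞)) ω
        = if r < k then 1 else 0 := by
      intro r
      by_cases h : r < k
      · rw [if_pos h, Set.indicator_of_mem (show ω ∈ {ω | ¬ cond r ω} from hlt r h)]
      · rw [if_neg h, Set.indicator_of_notMem]
        simp only [Set.mem_setOf_eq, not_not]
        exact hge r (le_of_not_gt h)
    rw [tsum_congr hind, tsum_eq_sum (s := Finset.range k)
      (fun r hr => if_neg (by simpa using Finset.mem_range.not.mp hr))]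
    have : ∀ r ∈ Finset.range k, (if r < k then (1:ℝ≥0∞) else 0) = 1 := by
      intro r hr; exact if_pos (Finset.mem_range.mp hr)
    rw [Finset.sum_congr rfl this]
    simp
  · have hset : {x : ℝ≥0∞ | ∃ r : ℕ, x = (r : ℝ≥0∞) ∧ 1 ≤ r ∧ cond r ω} = ∅ := by
      ext x
      simp only [Set.mem_setOf_eq, Set.mem_empty_iff_false, iff_false, not_exists]
      rintro r ⟨rfl, hr, hc⟩
      exact hex ⟨r, hc⟩
    rw [firstTime, hset, sInf_empty]
    have hind : ∀ r : ℕ, ({ω | ¬ cond r ω}).indicator (fun _ => (1:ℝ≥0∞)) ω = 1 := by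
      intro r
      exact Set.indicator_of_mem (show ω ∈ {ω | ¬ cond r ω} from fun hc => hex ⟨r, hc⟩) _
    rw [tsum_congr hind]
    exact (ENNReal.tsum_const_eq_top_of_ne_zero (α := ℕ) one_ne_zero).symm

lemma real_IE {α ι : Type*} [Fintype α] [DecidableEq ι] (J : Finset ι) (C : ι → α → Prop)
    [∀ j, DecidablePred (C j)] :
    ((Finset.univ.filter (fun x : α => ∀ j ∈ J, ¬ C j x)).card : ℝ)
      = ∑ K ∈ J.powerset, (-1 : ℝ) ^ K.card *
          ((Finset.univ.filter (fun x : α => ∀ j ∈ K, C j x)).card : ℝ) := by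
  classical
  have key : ∀ x : α, (if (∀ j ∈ J, ¬ C j x) then (1:ℝ) else 0)
      = ∑ K ∈ J.powerset, (-1:ℝ)^K.card * (if (∀ j ∈ K, C j x) then 1 else 0) := by
    intro x
    have h1 : (if (∀ j ∈ J, ¬ C j x) then (1:ℝ) else 0)
        = ∏ j ∈ J, ((if C j x then (-1:ℝ) else 0) + 1) := by
      have : ∀ j ∈ J, ((if C j x then (-1:ℝ) else 0) + 1) = if ¬ C j x then 1 else 0 := by
        intro j _; split_ifs with h h' h' <;> simp_all
      rw [Finset.prod_congr rfl this, Finset.prod_boole]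
    rw [h1, Finset.prod_add]
    refine Finset.sum_congr rfl fun K hK => ?_
    have h2 : ∀ j ∈ K, (if C j x then (-1:ℝ) else 0) = (-1) * (if C j x then 1 else 0) := by
      intro j _; split_ifs <;> ring
    rw [Finset.prod_congr rfl h2, Finset.prod_mul_distrib, Finset.prod_const,
      Finset.prod_const_one, mul_one, Finset.prod_boole]
  calc ((Finset.univ.filter (fun x : α => ∀ j ∈ J, ¬ C j x)).card : ℝ)
      = ∑ x : α, (if (∀ j ∈ J, ¬ C j x) then (1:ℝ) else 0) := by
        rw [Finset.sum_boole]
    _ = ∑ x : α, ∑ K ∈ J.powerset, (-1:ℝ)^K.card * (if (∀ j ∈ K, C j x) then 1 else 0) :=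
        Finset.sum_congr rfl fun x _ => key x
    _ = ∑ K ∈ J.powerset, (-1:ℝ)^K.card *
          ((Finset.univ.filter (fun x : α => ∀ j ∈ K, C j x)).card : ℝ) := by
        rw [Finset.sum_comm]
        refine Finset.sum_congr rfl fun K _ => ?_
        rw [← Finset.mul_sum, Finset.sum_boole]

lemma card_avoid (n r : ℕ) (S : Finset (Fin n)) :
    (Finset.univ.filter (fun f : Fin r → Fin n => ∀ i ∈ S, ∀ s : Fin r, f s ≠ i)).card
      = (n - S.card) ^ r := by
  classical
  have h : Finset.univ.filter (fun f : Fin r → Fin n => ∀ i ∈ S, ∀ s : Fin r, f s ≠ i)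
      = Fintype.piFinset (fun _ : Fin r => Sᶜ) := by
    ext f
    simp only [Finset.mem_filter, Finset.mem_univ, true_and, Fintype.mem_piFinset,
      Finset.mem_compl]
    constructor
    · intro h s hs
      exact h (f s) hs s rfl
    · intro h i hi s hfs
      exact h s (hfs ▸ hi)
  rw [h, Fintype.card_piFinset]
  simp [Finset.card_compl]

lemma harm_id (m : ℕ) :
    ∑ k ∈ Finset.range (m + 1), (-1:ℝ)^(k+1) * (m.choose k : ℝ) * (1 / (k:ℝ))
      = ∑ j ∈ Finset.range m, 1 / ((j : ℝ) + 1) := by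
  induction m with
  | zero => simp
  | succ m ih =>
    have step : ∀ M : ℕ, ∑ k ∈ Finset.range (M + 1), (-1:ℝ)^(k+1) * (M.choose k : ℝ) * (1/(k:ℝ))
        = ∑ i ∈ Finset.range M, (-1:ℝ)^(i+2) * (M.choose (i+1) : ℝ) * (1/((i:ℝ)+1)) := by
      intro M
      rw [Finset.sum_range_succ']
      simp [pow_succ]
    rw [step]
    have pascal : ∀ i : ℕ, ((m+1).choose (i+1) : ℝ) = (m.choose (i+1) : ℝ) + (m.choose i : ℝ) := by
      intro i
      rw [Nat.choose_succ_succ']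
      push_cast; ring
    have split : ∑ i ∈ Finset.range (m+1), (-1:ℝ)^(i+2) * ((m+1).choose (i+1) : ℝ) * (1/((i:ℝ)+1))
        = (∑ i ∈ Finset.range (m+1), (-1:ℝ)^(i+2) * (m.choose (i+1) : ℝ) * (1/((i:ℝ)+1)))
          + ∑ i ∈ Finset.range (m+1), (-1:ℝ)^(i+2) * (m.choose i : ℝ) * (1/((i:ℝ)+1)) := by
      rw [← Finset.sum_add_distrib]
      refine Finset.sum_congr rfl fun i _ => ?_
      rw [pascal]; ring
    have first : ∑ i ∈ Finset.range (m+1), (-1:ℝ)^(i+2) * (m.choose (i+1) : ℝ) * (1/((i:ℝ)+1))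
        = ∑ i ∈ Finset.range m, (-1:ℝ)^(i+2) * (m.choose (i+1) : ℝ) * (1/((i:ℝ)+1)) := by
      rw [Finset.sum_range_succ, Nat.choose_succ_self]
      simp
    have key2 : ∀ i : ℕ, (m.choose i : ℝ) * (1/((i:ℝ)+1))
        = ((m+1).choose (i+1) : ℝ) / ((m:ℝ)+1) := by
      intro i
      have h := Nat.add_one_mul_choose_eq m i
      have h' : ((m+1) * m.choose i : ℝ) = ((m+1).choose (i+1) * (i+1) : ℝ) := by
        exact_mod_cast congrArg (Nat.cast : ℕ → ℝ) h
      have hm : ((m:ℝ)+1) ≠ 0 := by positivity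
      have hi : ((i:ℝ)+1) ≠ 0 := by positivity
      field_simp
      push_cast at h' ⊢
      linarith [h']
    have second : ∑ i ∈ Finset.range (m+1), (-1:ℝ)^(i+2) * (m.choose i : ℝ) * (1/((i:ℝ)+1))
        = 1/((m:ℝ)+1) := by
      have : ∀ i ∈ Finset.range (m+1), (-1:ℝ)^(i+2) * (m.choose i : ℝ) * (1/((i:ℝ)+1))
          = ((-1:ℝ)^(i+1) * ((m+1).choose (i+1) : ℝ)) * (-1/((m:ℝ)+1)) := by
        intro i _
        rw [show (-1:ℝ)^(i+2) * (m.choose i : ℝ) * (1/((i:ℝ)+1))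
            = (-1:ℝ)^(i+2) * ((m.choose i : ℝ) * (1/((i:ℝ)+1))) by ring, key2 i]
        ring
      rw [Finset.sum_congr rfl this, ← Finset.sum_mul]
      have alt : ∑ i ∈ Finset.range (m+1), (-1:ℝ)^(i+1) * ((m+1).choose (i+1) : ℝ) = -1 := by
        have h0 : ∑ i ∈ Finset.range (m+2), (-1:ℝ)^i * ((m+1).choose i : ℝ) = 0 := by
          have := Int.alternating_sum_range_choose_of_ne (n := m+1) (by omega)
          exact_mod_cast congrArg (Int.cast : ℤ → ℝ) this
        rw [Finset.sum_range_succ'] at h0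
        simp only [pow_zero, Nat.choose_zero_right, Nat.cast_one, one_mul] at h0
        linarith
      rw [alt]; ring
    rw [split, first, second, ← step m, ih, Finset.sum_range_succ]

lemma card_filter_congr {α : Type*} [Fintype α] {p q : α → Prop}
    {hp : DecidablePred p} {hq : DecidablePred q} (h : ∀ x, p x ↔ q x) :
    (@Finset.filter α p hp Finset.univ).card = (@Finset.filter α q hq Finset.univ).card := by
  congr 1
  ext x
  simp only [Finset.mem_filter]
  exact and_congr Iff.rfl (h x)

lemma inner_harm {n : ℕ} (B : Finset (Fin n)) :
    ∑ S ∈ B.powerset.filter (fun S => S.Nonempty), (-1:ℝ)^(S.card+1) * ((n:ℝ) / (S.card:ℝ))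
      = (n:ℝ) * harmonicNumber B.card := by
  classical
  have hfull : ∑ S ∈ B.powerset, (-1:ℝ)^(S.card+1) * ((n:ℝ) / (S.card:ℝ))
      = ∑ S ∈ B.powerset.filter (fun S => S.Nonempty),
          (-1:ℝ)^(S.card+1) * ((n:ℝ)/(S.card:ℝ)) := by
    rw [← Finset.sum_filter_add_sum_filter_not B.powerset (fun S => S.Nonempty)]
    have hz : ∀ S ∈ B.powerset.filter (fun S => ¬ S.Nonempty),
        (-1:ℝ)^(S.card+1) * ((n:ℝ)/(S.card:ℝ)) = 0 := by
      intro S hS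
      have : S = ∅ := Finset.not_nonempty_iff_eq_empty.mp (Finset.mem_filter.mp hS).2
      subst this; simp
    rw [Finset.sum_eq_zero hz, add_zero]
  rw [← hfull, Finset.sum_powerset]
  have hstep : ∀ j ∈ Finset.range (B.card + 1),
      ∑ S ∈ Finset.powersetCard j B, (-1:ℝ)^(S.card+1) * ((n:ℝ)/(S.card:ℝ))
        = (B.card.choose j) • ((-1:ℝ)^(j+1) * ((n:ℝ)/(j:ℝ))) :=
    fun j _ => Finset.sum_powersetCard j B (fun k => (-1:ℝ)^(k+1) * ((n:ℝ)/(k:ℝ)))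
  rw [Finset.sum_congr rfl hstep]
  have hterm : ∀ j ∈ Finset.range (B.card + 1),
      (B.card.choose j) • ((-1:ℝ)^(j+1) * ((n:ℝ)/(j:ℝ)))
        = ((-1:ℝ)^(j+1) * (B.card.choose j : ℝ) * (1/(j:ℝ))) * (n:ℝ) := by
    intro j _
    rw [nsmul_eq_mul]
    ring
  rw [Finset.sum_congr rfl hterm, ← Finset.sum_mul, harm_id]
  rw [mul_comm]
  rfl

lemma measurableSet_cyl {n r : ℕ} (f : Fin r → Fin n) :
    MeasurableSet {ω : ℕ → Fin n | ∀ i : Fin r, ω (i : ℕ) = f i} := by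
  have : {ω : ℕ → Fin n | ∀ i : Fin r, ω (i : ℕ) = f i}
      = ⋂ i : Fin r, (fun ω : ℕ → Fin n => ω (i : ℕ)) ⁻¹' {f i} := by
    ext ω; simp [Set.mem_iInter]
  rw [this]
  exact MeasurableSet.iInter fun i =>
    (measurable_pi_apply (i : ℕ)) (measurableSet_singleton (f i))

lemma measure_cyl_event {n : ℕ} (μ : Measure (ℕ → Fin n))
    (hμ : ∀ (m : ℕ) (a : Fin m → Fin n),
      μ {ω : ℕ → Fin n | ∀ i : Fin m, ω (i : ℕ) = a i} = ∏ _i : Fin m, ((n : ℝ≥0∞))⁻¹)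
    (r : ℕ) (P : (Fin r → Fin n) → Prop) [DecidablePred P] :
    μ {ω : ℕ → Fin n | P (fun s : Fin r => ω (s : ℕ))}
      = ((Finset.univ.filter P).card : ℝ≥0∞) * ((n : ℝ≥0∞)⁻¹) ^ r := by
  classical
  have hset : {ω : ℕ → Fin n | P (fun s : Fin r => ω (s : ℕ))}
      = ⋃ f ∈ (Finset.univ.filter P), {ω : ℕ → Fin n | ∀ i : Fin r, ω (i : ℕ) = f i} := by
    ext ω
    simp only [Set.mem_setOf_eq, Set.mem_iUnion, Finset.mem_filter, Finset.mem_univ, true_and]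
    constructor
    · intro h
      exact ⟨fun s => ω (s : ℕ), h, fun i => rfl⟩
    · rintro ⟨f, hf, hfe⟩
      have : (fun s : Fin r => ω (s : ℕ)) = f := funext hfe
      rw [this]; exact hf
  rw [hset, measure_biUnion_finset ?_ (fun f _ => measurableSet_cyl f)]
  · rw [Finset.sum_congr rfl (fun f _ => hμ r f)]
    simp [Finset.prod_const, mul_comm]
  · intro f hf g hg hfg
    refine Set.disjoint_left.mpr fun ω hωf hωg => hfg ?_
    exact funext fun i => (hωf i).symm.trans (hωg i)

/-- Let `X₁, X₂, …` be i.i.d. uniform on `[n]` (the coordinate process on `[n]^ℕ` under the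
infinite uniform product measure `μ`, characterized by its values on cylinder sets).  Let
`A₁, …, A_v ⊆ [n]` be pairwise disjoint nonempty subsets, and `T_J` the cover time of a
nonempty set `J`.  Then, by inclusion-exclusion,
`E[min_j T_{A_j}] = n·Σ_{s=1}^{v} (−1)^{s+1} Σ_{j₁<⋯<j_s} H_{|A_{j₁}|+⋯+|A_{j_s}|}`. -/
theorem expected_retrieval_time_disjoint_sets (n : ℕ) (hn : 1 ≤ n)
    (μ : Measure (ℕ → Fin n))
    (hμ : ∀ (m : ℕ) (a : Fin m → Fin n),
      μ {ω : ℕ → Fin n | ∀ i : Fin m, ω (i : ℕ) = a i} = ∏ _i : Fin m, ((n : ℝ≥0∞))⁻¹)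
    (v : ℕ) (hv : 1 ≤ v) (A : Fin v → Finset (Fin n)) (hA : ∀ j, (A j).Nonempty)
    (hdisj : ∀ j j' : Fin v, j ≠ j' → Disjoint (A j) (A j')) :
    ∫⁻ ω, ⨅ j : Fin v, firstTime (fun r ω => ∀ i ∈ A j, ∃ s : Fin r, ω (s : ℕ) = i) ω ∂μ =
      ENNReal.ofReal ((n : ℝ) *
        ∑ s ∈ Finset.Icc 1 v, (-1 : ℝ) ^ (s + 1) *
          ∑ J ∈ Finset.powersetCard s (Finset.univ : Finset (Fin v)),
            harmonicNumber (∑ j ∈ J, (A j).card)) := by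
  classical
  have hn0 : (0:ℝ) < n := by exact_mod_cast hn
  -- the covering condition
  set cond : ℕ → (ℕ → Fin n) → Prop :=
    fun r ω => ∃ j : Fin v, ∀ i ∈ A j, ∃ s : Fin r, ω (s : ℕ) = i with hconddef
  set E : ℕ → Set (ℕ → Fin n) := fun r => {ω | ¬ cond r ω} with hEdef
  -- measurability
  have hE_meas : ∀ r, MeasurableSet (E r) := by
    intro r
    have hres : Measurable (fun (ω : ℕ → Fin n) (s : Fin r) => ω (s : ℕ)) :=
      measurable_pi_lambda _ (fun s => measurable_pi_apply _)
    have : E r = (fun (ω : ℕ → Fin n) (s : Fin r) => ω (s : ℕ)) ⁻¹'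
        {g : Fin r → Fin n | ¬ ∃ j : Fin v, ∀ i ∈ A j, ∃ s : Fin r, g s = i} := rfl
    rw [this]
    exact hres (Set.toFinite _).measurableSet
  -- Step 1 : rewrite the integral as a sum of measures
  have step1 : ∫⁻ ω, ⨅ j : Fin v,
      firstTime (fun r ω => ∀ i ∈ A j, ∃ s : Fin r, ω (s : ℕ) = i) ω ∂μ
      = ∑' r : ℕ, μ (E r) := by
    have hpt : ∀ ω : ℕ → Fin n, (⨅ j : Fin v,
        firstTime (fun r ω => ∀ i ∈ A j, ∃ s : Fin r, ω (s : ℕ) = i) ω)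
        = ∑' r : ℕ, (E r).indicator (fun _ => (1:ℝ≥0∞)) ω := by
      intro ω
      rw [iInf_firstTime (fun j r ω => ∀ i ∈ A j, ∃ s : Fin r, ω (s : ℕ) = i) ω]
      refine firstTime_eq_tsum _ ω ?_ ?_
      · rintro r r' hrr' ⟨j, hj⟩
        refine ⟨j, fun i hi => ?_⟩
        obtain ⟨s, hs⟩ := hj i hi
        exact ⟨Fin.castLE hrr' s, by simpa using hs⟩
      · rintro ⟨j, hj⟩
        obtain ⟨i, hi⟩ := hA j
        obtain ⟨s, -⟩ := hj i hi
        exact s.elim0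
    rw [lintegral_congr hpt,
      lintegral_tsum (fun r => (Measurable.indicator measurable_const (hE_meas r)).aemeasurable)]
    refine tsum_congr fun r => ?_
    rw [lintegral_indicator_const (hE_meas r), one_mul]
  -- Step 2 : measure of E r via counting
  set N : ℕ → ℕ := fun r => (Finset.univ.filter
    (fun f : Fin r → Fin n => ¬ ∃ j : Fin v, ∀ i ∈ A j, ∃ s : Fin r, f s = i)).card with hNdef
  have step2 : ∀ r, μ (E r) = ((N r : ℝ≥0∞)) * ((n : ℝ≥0∞)⁻¹) ^ r := by
    intro r
    have := measure_cyl_event μ hμ r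
      (fun g : Fin r → Fin n => ¬ ∃ j : Fin v, ∀ i ∈ A j, ∃ s : Fin r, g s = i)
    have hEeq : E r = {ω : ℕ → Fin n |
        ¬ ∃ j : Fin v, ∀ i ∈ A j, ∃ s : Fin r, (fun s : Fin r => ω (s : ℕ)) s = i} := rfl
    rw [hEeq]
    convert this using 3
  set p : ℕ → ℝ := fun r => (N r : ℝ) * ((n:ℝ)⁻¹) ^ r with hpdef
  have hp_nonneg : ∀ r, 0 ≤ p r := fun r => by positivity
  have step3 : ∀ r, μ (E r) = ENNReal.ofReal (p r) := by
    intro r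
    rw [step2 r, hpdef]
    rw [ENNReal.ofReal_mul (by positivity), ENNReal.ofReal_pow (by positivity),
      ENNReal.ofReal_inv_of_pos hn0, ENNReal.ofReal_natCast, ENNReal.ofReal_natCast]
  -- the inclusion-exclusion identity for p r
  set q : ℕ → ℝ := fun k => ((n:ℝ) - k) / n with hqdef
  set BJ : Finset (Fin v) → Finset (Fin n) := fun K => K.biUnion A with hBJdef
  have hpr : ∀ r, p r = ∑ K ∈ (Finset.univ : Finset (Fin v)).powerset,
      (-1:ℝ)^(K.card+1) * ∑ S ∈ (BJ K).powerset.filter (fun S => S.Nonempty),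
        (-1:ℝ)^(S.card+1) * (q S.card) ^ r := by
    intro r
    have hsum0 : ∑ K ∈ (Finset.univ : Finset (Fin v)).powerset, (-1:ℝ)^K.card = 0 := by
      rw [Finset.sum_powerset, Finset.card_fin]
      have hstep : ∀ s ∈ Finset.range (v+1),
          ∑ K ∈ Finset.powersetCard s (Finset.univ : Finset (Fin v)), (-1:ℝ)^K.card
            = (v.choose s) • ((-1:ℝ)^s) := by
        intro s _
        have h := Finset.sum_powersetCard s (Finset.univ : Finset (Fin v)) (fun k => (-1:ℝ)^k)
        rwa [Finset.card_fin] at h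
      rw [Finset.sum_congr rfl hstep]
      have h := Int.alternating_sum_range_choose_of_ne (n := v) (by omega)
      have h' : ∑ i ∈ Finset.range (v+1), (-1:ℝ)^i * (v.choose i : ℝ) = 0 := by
        exact_mod_cast congrArg (Int.cast : ℤ → ℝ) h
      simpa [nsmul_eq_mul, mul_comm] using h'
    have hNcast : ((N r : ℝ)) = ∑ K ∈ (Finset.univ : Finset (Fin v)).powerset, (-1:ℝ)^K.card *
        ((Finset.univ.filter (fun f : Fin r → Fin n =>
          ∀ j ∈ K, ∀ i ∈ A j, ∃ s : Fin r, f s = i)).card : ℝ) := by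
      have HIE := real_IE (Finset.univ : Finset (Fin v))
        (fun j (f : Fin r → Fin n) => ∀ i ∈ A j, ∃ s : Fin r, f s = i)
      refine Eq.trans ?_ (Eq.trans HIE ?_)
      · simp only [hNdef]
        exact_mod_cast card_filter_congr (fun f => by simp [not_exists])
      · refine Finset.sum_congr rfl fun K _ => ?_
        congr 1
        exact_mod_cast card_filter_congr (fun f => Iff.rfl)
    have hinner : ∀ K : Finset (Fin v),
        ((Finset.univ.filter (fun f : Fin r → Fin n =>
          ∀ j ∈ K, ∀ i ∈ A j, ∃ s : Fin r, f s = i)).card : ℝ)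
        = ∑ S ∈ (BJ K).powerset, (-1:ℝ)^S.card * (((n - S.card)^r : ℕ) : ℝ) := by
      intro K
      have HIE := real_IE (BJ K) (fun (i : Fin n) (f : Fin r → Fin n) => ∀ s : Fin r, f s ≠ i)
      refine Eq.trans ?_ (Eq.trans HIE ?_)
      · refine congrArg (Nat.cast : ℕ → ℝ) (card_filter_congr (fun f => ?_))
        constructor
        · intro h i hi
          obtain ⟨j, hj, hij⟩ := Finset.mem_biUnion.mp hi
          obtain ⟨s, hs⟩ := h j hj i hij
          exact fun hmiss => hmiss s hs
        · intro h j hj i hi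
          have hmem := h i (Finset.mem_biUnion.mpr ⟨j, hj, hi⟩)
          push_neg at hmem
          obtain ⟨s, hs⟩ := hmem
          exact ⟨s, hs⟩
      · refine Finset.sum_congr rfl fun S hS => ?_
        congr 1
        exact congrArg (Nat.cast : ℕ → ℝ)
          (Eq.trans (card_filter_congr (fun f => Iff.rfl)) (card_avoid n r S))
    have hcast : ∀ S : Finset (Fin n), (((n - S.card)^r : ℕ) : ℝ) * ((n:ℝ)⁻¹)^r = q S.card ^ r := by
      intro S
      have h2 : S.card ≤ n := by simpa using Finset.card_le_univ S
      have hc : ((n - S.card : ℕ) : ℝ) = (n:ℝ) - S.card := by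
        push_cast [h2]; ring
      have hc2 : (((n - S.card)^r : ℕ) : ℝ) = ((n:ℝ) - S.card)^r := by
        rw [Nat.cast_pow, hc]
      rw [hqdef]
      simp only []
      rw [div_eq_mul_inv, mul_pow, hc2]
    calc p r = ((N r : ℝ)) * ((n:ℝ)⁻¹)^r := rfl
      _ = ∑ K ∈ (Finset.univ : Finset (Fin v)).powerset,
            (-1:ℝ)^K.card * ∑ S ∈ (BJ K).powerset, (-1:ℝ)^S.card * (q S.card)^r := by
          rw [hNcast, Finset.sum_mul]
          refine Finset.sum_congr rfl fun K _ => ?_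
          rw [hinner K, mul_assoc, Finset.sum_mul]
          congr 1
          refine Finset.sum_congr rfl fun S _ => ?_
          rw [mul_assoc, hcast S]
      _ = ∑ K ∈ (Finset.univ : Finset (Fin v)).powerset,
            (-1:ℝ)^K.card * ((1:ℝ) + ∑ S ∈ (BJ K).powerset.filter (fun S => S.Nonempty),
              (-1:ℝ)^S.card * (q S.card)^r) := by
          refine Finset.sum_congr rfl fun K _ => ?_
          congr 1
          rw [← Finset.sum_filter_add_sum_filter_not (BJ K).powerset (fun S => S.Nonempty),
            add_comm]
          congr 1
          have hone : (BJ K).powerset.filter (fun S => ¬ S.Nonempty) = {∅} := by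
            ext S
            simp only [Finset.mem_filter, Finset.mem_powerset,
              Finset.not_nonempty_iff_eq_empty, Finset.mem_singleton]
            constructor
            · exact fun h => h.2
            · rintro rfl
              exact ⟨Finset.empty_subset _, rfl⟩
          rw [hone, Finset.sum_singleton]
          have hq0 : q 0 = 1 := by
            rw [hqdef]
            simp only [Nat.cast_zero, sub_zero]
            exact div_self hn0.ne'
          simp [hq0]
      _ = (∑ K ∈ (Finset.univ : Finset (Fin v)).powerset, (-1:ℝ)^K.card)
            + ∑ K ∈ (Finset.univ : Finset (Fin v)).powerset,
              (-1:ℝ)^K.card * ∑ S ∈ (BJ K).powerset.filter (fun S => S.Nonempty),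
                (-1:ℝ)^S.card * (q S.card)^r := by
          rw [← Finset.sum_add_distrib]
          refine Finset.sum_congr rfl fun K _ => ?_
          ring
      _ = ∑ K ∈ (Finset.univ : Finset (Fin v)).powerset,
            (-1:ℝ)^(K.card+1) * ∑ S ∈ (BJ K).powerset.filter (fun S => S.Nonempty),
              (-1:ℝ)^(S.card+1) * (q S.card) ^ r := by
          rw [hsum0, zero_add]
          refine Finset.sum_congr rfl fun K _ => ?_
          rw [Finset.mul_sum, Finset.mul_sum]
          refine Finset.sum_congr rfl fun S _ => ?_
          ring
  -- summability and tsum computations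
  have hq_mem : ∀ (K : Finset (Fin v)) (S : Finset (Fin n)), S.Nonempty →
      0 ≤ q S.card ∧ q S.card < 1 := by
    intro K S hS
    have h1 : 1 ≤ S.card := Finset.card_pos.mpr hS
    have h2 : S.card ≤ n := by
      simpa using Finset.card_le_univ S
    constructor
    · apply div_nonneg _ (le_of_lt hn0)
      have : (S.card : ℝ) ≤ n := by exact_mod_cast h2
      linarith
    · rw [div_lt_one hn0]
      have : (1:ℝ) ≤ S.card := by exact_mod_cast h1
      linarith
  have hgeo : ∀ (S : Finset (Fin n)), S.Nonempty →
      (Summable fun r : ℕ => (q S.card)^r) ∧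
      (∑' r : ℕ, (q S.card)^r) = (n:ℝ) / S.card := by
    intro S hS
    obtain ⟨h0, h1⟩ := hq_mem ∅ S hS
    refine ⟨summable_geometric_of_lt_one h0 h1, ?_⟩
    rw [tsum_geometric_of_lt_one h0 h1]
    have h1' : 1 ≤ S.card := Finset.card_pos.mpr hS
    have hc0 : (0:ℝ) < S.card := by exact_mod_cast h1'
    rw [hqdef]
    field_simp
    rw [sub_sub_cancel, div_self hc0.ne']
  have hsummableF : ∀ K ∈ (Finset.univ : Finset (Fin v)).powerset, Summable fun r : ℕ =>
      (-1:ℝ)^(K.card+1) * ∑ S ∈ (BJ K).powerset.filter (fun S => S.Nonempty),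
        (-1:ℝ)^(S.card+1) * (q S.card) ^ r := by
    intro K _
    refine Summable.mul_left _ (summable_sum fun S hS => Summable.mul_left _ ?_)
    exact (hgeo S (Finset.mem_filter.mp hS).2).1
  have hp_sum : Summable p := by
    have : p = fun r => ∑ K ∈ (Finset.univ : Finset (Fin v)).powerset,
        (-1:ℝ)^(K.card+1) * ∑ S ∈ (BJ K).powerset.filter (fun S => S.Nonempty),
          (-1:ℝ)^(S.card+1) * (q S.card) ^ r := funext hpr
    rw [this]
    exact summable_sum hsummableF
  have htsum : ∑' r : ℕ, p r = ∑ K ∈ (Finset.univ : Finset (Fin v)).powerset,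
      (-1:ℝ)^(K.card+1) * ((n:ℝ) * harmonicNumber (BJ K).card) := by
    rw [tsum_congr hpr, Summable.tsum_finsetSum hsummableF]
    refine Finset.sum_congr rfl fun K _ => ?_
    rw [tsum_mul_left]
    congr 1
    rw [Summable.tsum_finsetSum (fun S hS => Summable.mul_left _ (hgeo S (Finset.mem_filter.mp hS).2).1)]
    rw [← inner_harm (BJ K)]
    refine Finset.sum_congr rfl fun S hS => ?_
    rw [tsum_mul_left, (hgeo S (Finset.mem_filter.mp hS).2).2]
  -- final regrouping
  have hcardBJ : ∀ K : Finset (Fin v), (BJ K).card = ∑ j ∈ K, (A j).card := by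
    intro K
    exact Finset.card_biUnion (fun j _ j' _ hne => hdisj j j' hne)
  have hfinal : ∑ K ∈ (Finset.univ : Finset (Fin v)).powerset,
      (-1:ℝ)^(K.card+1) * ((n:ℝ) * harmonicNumber (BJ K).card)
      = (n : ℝ) * ∑ s ∈ Finset.Icc 1 v, (-1 : ℝ) ^ (s + 1) *
          ∑ J ∈ Finset.powersetCard s (Finset.univ : Finset (Fin v)),
            harmonicNumber (∑ j ∈ J, (A j).card) := by
    rw [Finset.sum_powerset, Finset.card_fin]
    have hinner2 : ∀ s ∈ Finset.range (v+1),
        ∑ K ∈ Finset.powersetCard s (Finset.univ : Finset (Fin v)),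
          (-1:ℝ)^(K.card+1) * ((n:ℝ) * harmonicNumber (BJ K).card)
        = (n:ℝ) * ((-1:ℝ)^(s+1) * ∑ J ∈ Finset.powersetCard s (Finset.univ : Finset (Fin v)),
            harmonicNumber (∑ j ∈ J, (A j).card)) := by
      intro s _
      rw [Finset.mul_sum, Finset.mul_sum]
      refine Finset.sum_congr rfl fun K hK => ?_
      rw [(Finset.mem_powersetCard.mp hK).2, hcardBJ K]
      ring
    rw [Finset.sum_congr rfl hinner2, ← Finset.mul_sum]
    congr 1
    rw [Finset.sum_range_succ']
    have h0 : (-1:ℝ)^(0+1) * ∑ J ∈ Finset.powersetCard 0 (Finset.univ : Finset (Fin v)),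
        harmonicNumber (∑ j ∈ J, (A j).card) = 0 := by
      simp [harmonicNumber]
    rw [h0, add_zero, ← Finset.Ico_add_one_right_eq_Icc, Finset.sum_Ico_eq_sum_range]
    norm_num
    refine Finset.sum_congr rfl fun i _ => ?_
    rw [add_comm 1 i]
  -- put everything together
  rw [step1, tsum_congr step3, ← ENNReal.ofReal_tsum_of_nonneg hp_nonneg hp_sum, htsum, hfinal]
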